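/- If x ∈ Δ_n has support of size at least 2 and T(A,x) is negative semidefinite, then at most one index i in the support of x has a dominating diagonal entry (A_{ii} > A_{ij} for all j ≠ i). -/

import Mathlib

open Matrix

/-- if `x ∈ Δ_n` has support of size at least 2 and `T(A,x)` is negative
semidefinite (via the equivalent quadratic-form condition), then at most one index in the
support of `x` has a dominating diagonal entry. -/
theorem negSemidef_at_most_one_dominating {n : ℕ} (A : Matrix (Fin n) (Fin n) ℝ)
    (hA : A.IsSymm)
    (x : Fin n → ℝ) (hx : x ∈ stdSimplex ℝ (Fin n))
    (hmix : 2 ≤ (Finset.univ.filter (fun i => 0 < x i)).card)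
    (hnsd : ∀ y : Fin n → ℝ, (∑ i, y i) = 0 → (∀ i, x i = 0 → y i = 0) →
      y ⬝ᵥ A.mulVec y ≤ 0) :
    ∀ i j, 0 < x i → 0 < x j →
      (∀ m, m ≠ i → A i m < A i i) → (∀ m, m ≠ j → A j m < A j j) → i = j := by
  intro i j hxi hxj hdi hdj
  by_contra hij
  set y : Fin n → ℝ := fun k => if k = i then 1 else if k = j then -1 else 0 with hy
  have hsum : (∑ k, y k) = 0 := by
    have : (∑ k, y k) = y i + y j := by
      rw [← Finset.sum_subset (Finset.subset_univ {i, j})]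
      · rw [Finset.sum_pair hij]
      · intro k _ hk
        simp only [Finset.mem_insert, Finset.mem_singleton, not_or] at hk
        simp [hy, hk.1, hk.2]
    rw [this]; simp [hy, hij, Ne.symm hij]
  have hsupp : ∀ k, x k = 0 → y k = 0 := by
    intro k hk
    have hki : k ≠ i := fun h => by subst h; exact absurd hk hxi.ne'
    have hkj : k ≠ j := fun h => by subst h; exact absurd hk hxj.ne'
    simp [hy, hki, hkj]
  have hle := hnsd y hsum hsupp
  have hquad : y ⬝ᵥ A.mulVec y = A i i - A i j - A j i + A j j := by
    have hsupy : ∀ k, k ≠ i → k ≠ j → y k = 0 := by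
      intro k h1 h2; simp [hy, h1, h2]
    have hmv : ∀ k, A.mulVec y k = A k i - A k j := by
      intro k
      unfold Matrix.mulVec dotProduct
      have : (∑ m, A k m * y m) = A k i * y i + A k j * y j := by
        rw [← Finset.sum_subset (Finset.subset_univ {i, j})]
        · rw [Finset.sum_pair hij]
        · intro m _ hm
          simp only [Finset.mem_insert, Finset.mem_singleton, not_or] at hm
          simp [hsupy m hm.1 hm.2]
      rw [this]
      simp [hy, hij, Ne.symm hij]; ring
    unfold dotProduct
    have : (∑ k, y k * A.mulVec y k) = y i * A.mulVec y i + y j * A.mulVec y j := by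
      rw [← Finset.sum_subset (Finset.subset_univ {i, j})]
      · rw [Finset.sum_pair hij]
      · intro m _ hm
        simp only [Finset.mem_insert, Finset.mem_singleton, not_or] at hm
        simp [hsupy m hm.1 hm.2]
    rw [this, hmv, hmv]
    simp [hy, hij, Ne.symm hij]; ring
  have h1 : A i j < A i i := hdi j (Ne.symm hij)
  have h2 : A j i < A j j := hdj i hij
  rw [hquad] at hle
  linarith
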